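/- Let β ≥ 0 and let A = (a_{n,k}) be a lower triangular infinite matrix of nonnegative real numbers (a_{n,k} = 0 for k > n). Suppose there is a constant C, independent of n and m, such that Σ_{k=0}^{m-1} (k+1)^β |a_{n,k}/(k+1)^β − a_{n,k+1}/(k+2)^β| ≤ C·a_{n,m} for all 0 ≤ m ≤ n. Then there is a constant C', independent of n and l, such that a_{n,l} ≤ C'·a_{n,n} for all 0 ≤ l ≤ n. -/

import Mathlib

open Real MeasureTheory

theorem HBV_row_dominated_by_last
    (β : ℝ) (hβ : 0 ≤ β)
    (a : ℕ → ℕ → ℝ) (htri : ∀ n k : ℕ, n < k → a n k = 0)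
    (hnn : ∀ n k : ℕ, 0 ≤ a n k)
    (C : ℝ) (hC : 0 < C)
    (hA : ∀ n m : ℕ, m ≤ n →
      ∑ k ∈ Finset.range m,
        ((k : ℝ) + 1) ^ β * |a n k / ((k : ℝ) + 1) ^ β - a n (k + 1) / ((k : ℝ) + 2) ^ β|
        ≤ C * a n m)
    :
    ∃ C' : ℝ, 0 < C' ∧ ∀ n l : ℕ, l ≤ n → a n l ≤ C' * a n n := by
  refine ⟨1 + C, by linarith, ?_⟩
  intro n l hln
  set f : ℕ → ℝ := fun k => a n k / ((k : ℝ) + 1) ^ β with hf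
  have hpow : ∀ k : ℕ, (0:ℝ) < ((k : ℝ) + 1) ^ β := fun k =>
    Real.rpow_pos_of_pos (by positivity) β
  -- telescoping
  have htel : f l = f n + ∑ k ∈ Finset.Ico l n, (f k - f (k + 1)) := by
    have h := Finset.sum_Ico_eq_sub (fun k => f k - f (k + 1)) hln
    rw [h, Finset.sum_range_sub' f, Finset.sum_range_sub' f]; ring
  -- bound the sum
  have hterm : ∀ k ∈ Finset.Ico l n,
      f k - f (k + 1) ≤ (((k : ℝ) + 1) ^ β / ((l : ℝ) + 1) ^ β) *
        |a n k / ((k : ℝ) + 1) ^ β - a n (k + 1) / ((k : ℝ) + 2) ^ β| := by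
    intro k hk
    rw [Finset.mem_Ico] at hk
    have hlk : ((l : ℝ) + 1) ^ β ≤ ((k : ℝ) + 1) ^ β := by
      apply Real.rpow_le_rpow (by positivity) _ hβ
      have : (l : ℝ) ≤ (k : ℝ) := by exact_mod_cast hk.1
      linarith
    have habs : f k - f (k + 1) ≤ |a n k / ((k : ℝ) + 1) ^ β - a n (k + 1) / ((k : ℝ) + 2) ^ β| := by
      have : f (k + 1) = a n (k + 1) / ((k : ℝ) + 2) ^ β := by
        simp only [hf]; push_cast; ring_nf
      rw [this, hf]
      exact le_abs_self _
    have h1 : 1 ≤ ((k : ℝ) + 1) ^ β / ((l : ℝ) + 1) ^ β := by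
      rw [le_div_iff₀ (hpow l)]; linarith
    calc f k - f (k + 1) ≤ |a n k / ((k : ℝ) + 1) ^ β - a n (k + 1) / ((k : ℝ) + 2) ^ β| := habs
      _ ≤ (((k : ℝ) + 1) ^ β / ((l : ℝ) + 1) ^ β) *
          |a n k / ((k : ℝ) + 1) ^ β - a n (k + 1) / ((k : ℝ) + 2) ^ β| := by
        nlinarith [abs_nonneg (a n k / ((k : ℝ) + 1) ^ β - a n (k + 1) / ((k : ℝ) + 2) ^ β)]
  have hsum : ∑ k ∈ Finset.Ico l n, (f k - f (k + 1))
      ≤ (1 / ((l : ℝ) + 1) ^ β) * ∑ k ∈ Finset.range n,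
        ((k : ℝ) + 1) ^ β * |a n k / ((k : ℝ) + 1) ^ β - a n (k + 1) / ((k : ℝ) + 2) ^ β| := by
    calc ∑ k ∈ Finset.Ico l n, (f k - f (k + 1))
        ≤ ∑ k ∈ Finset.Ico l n, (((k : ℝ) + 1) ^ β / ((l : ℝ) + 1) ^ β) *
          |a n k / ((k : ℝ) + 1) ^ β - a n (k + 1) / ((k : ℝ) + 2) ^ β| :=
        Finset.sum_le_sum hterm
      _ = (1 / ((l : ℝ) + 1) ^ β) * ∑ k ∈ Finset.Ico l n,
          ((k : ℝ) + 1) ^ β * |a n k / ((k : ℝ) + 1) ^ β - a n (k + 1) / ((k : ℝ) + 2) ^ β| := by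
        rw [Finset.mul_sum]; apply Finset.sum_congr rfl; intro k _; ring
      _ ≤ (1 / ((l : ℝ) + 1) ^ β) * ∑ k ∈ Finset.range n,
          ((k : ℝ) + 1) ^ β * |a n k / ((k : ℝ) + 1) ^ β - a n (k + 1) / ((k : ℝ) + 2) ^ β| := by
        apply mul_le_mul_of_nonneg_left _ (by positivity)
        apply Finset.sum_le_sum_of_subset_of_nonneg
        · intro k hk
          rw [Finset.mem_Ico] at hk
          exact Finset.mem_range.mpr hk.2
        · intro k _ _; positivity
  have hfin : f l ≤ f n + (1 / ((l : ℝ) + 1) ^ β) * (C * a n n) := by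
    have hA' := hA n n le_rfl
    have := hsum.trans (mul_le_mul_of_nonneg_left hA' (by positivity : (0:ℝ) ≤ 1 / ((l : ℝ) + 1) ^ β))
    linarith [htel]
  -- conclude
  have hln' : ((l : ℝ) + 1) ^ β ≤ ((n : ℝ) + 1) ^ β := by
    apply Real.rpow_le_rpow (by positivity) _ hβ
    have : (l : ℝ) ≤ (n : ℝ) := by exact_mod_cast hln
    linarith
  have hmul := mul_le_mul_of_nonneg_right hfin (le_of_lt (hpow l))
  have hfl : f l * ((l : ℝ) + 1) ^ β = a n l := by
    simp only [hf]
    field_simp [hf, (hpow l).ne']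
  have hfn : f n * ((l : ℝ) + 1) ^ β ≤ a n n := by
    rw [hf]
    rw [div_mul_eq_mul_div, div_le_iff₀ (hpow n)]
    nlinarith [hnn n n, hpow l, hpow n]
  have hrest : (1 / ((l : ℝ) + 1) ^ β) * (C * a n n) * ((l : ℝ) + 1) ^ β = C * a n n := by
    field_simp
  rw [hfl] at hmul
  calc a n l ≤ (f n + (1 / ((l : ℝ) + 1) ^ β) * (C * a n n)) * ((l : ℝ) + 1) ^ β := hmul
    _ = f n * ((l : ℝ) + 1) ^ β + C * a n n := by rw [add_mul, hrest]
    _ ≤ a n n + C * a n n := by linarith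
    _ = (1 + C) * a n n := by ring
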